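/- For linear demand v(p) = a − b·p with a, b > 0, and positive continuous discount function φ on [0,T], the stationarity condition φ(t)·v(p(t)) + (φ(t)·p(t) + q)·v'(p(t)) = 0 together with the sales constraint ∫₀ᵀ v(p(t)) dt = Sₗ is uniquely solved by p(t) = (1/2)·(a/b − q/φ(t)) with q = (2Sₗ − aT)/(b·∫₀ᵀ dt/φ(t)). -/
import Mathlib


open MeasureTheory

/-- Closed-form solution with linear demand `v(p) = a − b·p`: the stationarity condition
together with the final sales constraint is uniquely solved by
`p(t) = (1/2)(a/b − q/φ(t))` with `q = (2Sₗ − aT)/(b·∫₀ᵀ dt/φ(t))`. -/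
theorem linear_demand_closed_form
    (T Sl a b q : ℝ) (hT : 0 < T) (ha : 0 < a) (hb : 0 < b)
    (φ : ℝ → ℝ) (hφc : ContinuousOn φ (Set.Icc 0 T))
    (hφ : ∀ t ∈ Set.Icc (0:ℝ) T, 0 < φ t)
    (p : ℝ → ℝ)
    (hstat : ∀ t ∈ Set.Icc (0:ℝ) T,
      φ t * (a - b * p t) + (φ t * p t + q) * (-b) = 0)
    (hsales : ∫ t in (0:ℝ)..T, (a - b * p t) = Sl) :
    (∀ t ∈ Set.Icc (0:ℝ) T, p t = (1/2) * (a / b - q / φ t)) ∧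
    q = (2 * Sl - a * T) / (b * ∫ t in (0:ℝ)..T, 1 / φ t) := by
  have hp : ∀ t ∈ Set.Icc (0:ℝ) T, p t = (1/2) * (a / b - q / φ t) := by
    intro t ht
    have hφt := hφ t ht
    have h := hstat t ht
    field_simp at h ⊢
    nlinarith [h]
  refine ⟨hp, ?_⟩
  -- continuity / integrability of 1/φ
  have hφne : ∀ t ∈ Set.Icc (0:ℝ) T, φ t ≠ 0 := fun t ht => (hφ t ht).ne'
  have hcont : ContinuousOn (fun t => 1 / φ t) (Set.Icc 0 T) := by
    exact ContinuousOn.div continuousOn_const hφc hφne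
  have hint : IntervalIntegrable (fun t => 1 / φ t) volume 0 T := by
    apply ContinuousOn.intervalIntegrable
    rwa [Set.uIcc_of_le hT.le]
  set I := ∫ t in (0:ℝ)..T, 1 / φ t with hI
  have hIpos : 0 < I := by
    refine intervalIntegral.intervalIntegral_pos_of_pos_on hint ?_ hT
    intro x hx
    exact div_pos one_pos (hφ x ⟨hx.1.le, hx.2.le⟩)
  -- rewrite the integrand
  have hcongr : (∫ t in (0:ℝ)..T, (a - b * p t))
      = ∫ t in (0:ℝ)..T, (a/2 + (b*q/2) * (1 / φ t)) := by
    apply intervalIntegral.integral_congr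
    intro t ht
    rw [Set.uIcc_of_le hT.le] at ht
    have hφt := hφ t ht
    simp only
    rw [hp t ht]
    field_simp
    ring
  have hsplit : (∫ t in (0:ℝ)..T, (a/2 + (b*q/2) * (1 / φ t)))
      = a/2 * T + (b*q/2) * I := by
    rw [intervalIntegral.integral_add (intervalIntegrable_const) (hint.const_mul _),
      intervalIntegral.integral_const, intervalIntegral.integral_const_mul]
    simp [hI]
    ring
  have hSl : a/2 * T + (b*q/2) * I = Sl := by
    rw [← hsplit, ← hcongr, hsales]
  have hbI : b * I ≠ 0 := by positivity
  field_simp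
  linarith [hSl]
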